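/- In the algebra H of the previous context with χ ∈ ℤ_{≥0}, define e⁻_n by Σ_{n≥0} e⁻_n t^n = exp(-Σ_{r≥1} p⁻_r (-t)^r / r). Then e⁻_n h⁺_m = Σ_{r=0}^{min(m,n)} d_r h⁺_{m-r} e⁻_{n-r}, where Σ_{r≥0} d_r u^r = Π_{g=0}^{χ-1} (1 + q^{χ-(2g+1)} u), i.e., d_r = qdim(Λ^r(V)) with qdim(V) = [χ]. -/

import Mathlib

/-- The quantum integer `[n] = q^{-n+1} + q^{-n+3} + ⋯ + q^{n-1}` in `ℚ(q)`. -/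
noncomputable def qIntF (n : ℕ) : RatFunc ℚ :=
  ∑ g ∈ Finset.range n, RatFunc.X ^ ((n : ℤ) - (2 * g + 1))

/-- The formal exponential `exp f = Σ_{n≥0} f^n / n!` of a formal power series
over a (possibly noncommutative) ℚ-algebra, computed coefficientwise; it is
meaningful when the constant coefficient of `f` is zero. -/
noncomputable def expH {H : Type*} [Ring H] [Algebra ℚ H] (f : PowerSeries H) :
    PowerSeries H :=
  PowerSeries.mk fun d => ∑ n ∈ Finset.range (d + 1),
    ((Nat.factorial n : ℚ)⁻¹) • PowerSeries.coeff d (f ^ n)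


open PowerSeries Finset
noncomputable def theta {R : Type*} [Ring R] (f : PowerSeries R) : PowerSeries R :=
  PowerSeries.mk fun n => n • PowerSeries.coeff (R := R) n f

section Theta
variable {R : Type*} [Ring R]

@[simp] lemma coeff_theta (n : ℕ) (f : PowerSeries R) :
    PowerSeries.coeff (R := R) n (theta f) = n • PowerSeries.coeff (R := R) n f := by
  simp [theta]

lemma theta_mul (f g : PowerSeries R) :
    theta (f * g) = theta f * g + f * theta g := by
  ext n
  simp only [coeff_theta, map_add, coeff_mul]
  rw [Finset.smul_sum, ← Finset.sum_add_distrib]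
  refine Finset.sum_congr rfl fun p hp => ?_
  rw [Finset.HasAntidiagonal.mem_antidiagonal] at hp
  rw [← hp, add_smul, smul_mul_assoc, mul_smul_comm]

lemma commute_of_coeff_commute (f g : PowerSeries R)
    (h : ∀ i j, Commute (PowerSeries.coeff (R := R) i f) (PowerSeries.coeff (R := R) j g)) :
    Commute f g := by
  show f * g = g * f
  ext n
  rw [coeff_mul, coeff_mul, ← Finset.Nat.sum_antidiagonal_swap]
  refine Finset.sum_congr rfl fun p hp => ?_
  simp only [Prod.fst_swap, Prod.snd_swap]
  exact (h p.2 p.1).eq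

lemma theta_commute (f : PowerSeries R)
    (h : ∀ i j, Commute (PowerSeries.coeff (R := R) i f) (PowerSeries.coeff (R := R) j f)) :
    Commute f (theta f) := by
  refine commute_of_coeff_commute _ _ fun i j => ?_
  rw [coeff_theta]
  exact (h i j).smul_right j

lemma theta_pow (f : PowerSeries R) (hc : Commute f (theta f)) (k : ℕ) :
    theta (f ^ (k + 1)) = (k + 1) • (theta f * f ^ k) := by
  induction k with
  | zero => simp [theta_mul]
  | succ k ih =>
      have hcom : f * (theta f * f ^ k) = theta f * f ^ (k + 1) := by
        rw [← mul_assoc, hc.eq, mul_assoc, ← pow_succ']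
      rw [pow_succ' f (k+1), theta_mul, ih, mul_smul_comm, hcom, add_comm, ← succ_nsmul]

lemma coeff_pow_eq_zero (f : PowerSeries R) (h0 : PowerSeries.constantCoeff (R := R) f = 0)
    {d k : ℕ} (hdk : d < k) : PowerSeries.coeff (R := R) d (f ^ k) = 0 := by
  induction k generalizing d with
  | zero => omega
  | succ k ih =>
      rw [pow_succ', coeff_mul]
      refine Finset.sum_eq_zero fun p hp => ?_
      rw [Finset.HasAntidiagonal.mem_antidiagonal] at hp
      rcases Nat.eq_zero_or_pos p.1 with h1 | h1
      · rw [h1, PowerSeries.coeff_zero_eq_constantCoeff, h0, zero_mul]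
      · rw [ih (by omega), mul_zero]

end Theta

section Exp
variable {R : Type*} [Ring R] [Algebra ℚ R]

omit [Algebra ℚ R] in
lemma nsmul_coeff_one (n : ℕ) : n • (PowerSeries.coeff (R := R) n) 1 = 0 := by
  cases n with
  | zero => simp
  | succ k => simp [PowerSeries.coeff_one]

lemma exp_rec (f : PowerSeries R) (h0 : PowerSeries.constantCoeff (R := R) f = 0)
    (hcc : ∀ i j, Commute (PowerSeries.coeff (R := R) i f) (PowerSeries.coeff (R := R) j f)) (n : ℕ) :
    n • PowerSeries.coeff (R := R) n (expH f)
      = ∑ p ∈ Finset.HasAntidiagonal.antidiagonal n,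
          (p.1 • PowerSeries.coeff (R := R) p.1 f) * PowerSeries.coeff (R := R) p.2 (expH f) := by
  have hc := theta_commute f hcc
  have hfac : ∀ (k : ℕ) (x : R), ((k+1).factorial : ℚ)⁻¹ • ((k+1) • x)
      = ((k.factorial : ℚ)⁻¹) • x := by
    intro k x
    rw [← Nat.cast_smul_eq_nsmul ℚ (k+1) x, smul_smul]
    congr 1
    rw [Nat.factorial_succ]
    have h1 : ((k+1 : ℕ) : ℚ) ≠ 0 := by positivity
    have h2 : ((k.factorial : ℕ) : ℚ) ≠ 0 := by
      exact_mod_cast Nat.cast_ne_zero.mpr (Nat.factorial_ne_zero k)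
    push_cast
    field_simp
  have hL : n • PowerSeries.coeff (R := R) n (expH f)
      = ∑ k ∈ Finset.range n,
          ((k.factorial : ℚ)⁻¹) • PowerSeries.coeff (R := R) n (theta f * f ^ k) := by
    rw [show PowerSeries.coeff (R := R) n (expH f) = ∑ k ∈ Finset.range (n + 1),
        ((Nat.factorial k : ℚ)⁻¹) • PowerSeries.coeff (R := R) n (f ^ k) from by simp [expH],
      Finset.smul_sum]
    rw [Finset.sum_range_succ']
    have hzero : n • (Nat.factorial 0 : ℚ)⁻¹ • PowerSeries.coeff (R := R) n (f ^ 0) = 0 := by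
      rw [smul_comm, pow_zero, nsmul_coeff_one, smul_zero]
    rw [hzero, add_zero]
    refine Finset.sum_congr rfl fun k _ => ?_
    rw [smul_comm, ← coeff_theta, theta_pow f hc k, map_nsmul, hfac]
  rw [hL]
  -- now the RHS
  have hR : ∑ p ∈ Finset.HasAntidiagonal.antidiagonal n,
      (p.1 • PowerSeries.coeff (R := R) p.1 f) * PowerSeries.coeff (R := R) p.2 (expH f)
      = ∑ j ∈ Finset.range (n+1),
          ((j.factorial : ℚ)⁻¹) • PowerSeries.coeff (R := R) n (theta f * f ^ j) := by
    have step1 : ∀ p ∈ Finset.HasAntidiagonal.antidiagonal n,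
        (p.1 • PowerSeries.coeff (R := R) p.1 f) * PowerSeries.coeff (R := R) p.2 (expH f)
        = ∑ j ∈ Finset.range (n+1), ((j.factorial : ℚ)⁻¹) •
            (PowerSeries.coeff (R := R) p.1 (theta f) * PowerSeries.coeff (R := R) p.2 (f ^ j)) := by
      intro p hp
      rw [Finset.HasAntidiagonal.mem_antidiagonal] at hp
      have hple : p.2 + 1 ≤ n + 1 := by omega
      rw [show PowerSeries.coeff (R := R) p.2 (expH f) = ∑ j ∈ Finset.range (p.2 + 1),
          ((Nat.factorial j : ℚ)⁻¹) • PowerSeries.coeff (R := R) p.2 (f ^ j) from by simp [expH],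
        Finset.mul_sum]
      rw [← Finset.sum_subset (Finset.range_subset_range.mpr hple)]
      · exact Finset.sum_congr rfl fun j _ => by rw [mul_smul_comm, coeff_theta]
      · intro j _ hj
        rw [Finset.mem_range, not_lt] at hj
        rw [coeff_pow_eq_zero f h0 (by omega), mul_zero, smul_zero]
    rw [Finset.sum_congr rfl step1, Finset.sum_comm]
    refine Finset.sum_congr rfl fun j _ => ?_
    rw [← Finset.smul_sum, PowerSeries.coeff_mul]
  rw [hR, Finset.sum_range_succ]
  have hlast : PowerSeries.coeff (R := R) n (theta f * f ^ n) = 0 := by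
    rw [PowerSeries.coeff_mul]
    refine Finset.sum_eq_zero fun p hp => ?_
    rw [Finset.HasAntidiagonal.mem_antidiagonal] at hp
    rcases Nat.lt_or_ge p.2 n with h | h
    · rw [coeff_pow_eq_zero f h0 h, mul_zero]
    · have h1 : p.1 = 0 := by omega
      rw [h1, coeff_theta, zero_smul, zero_mul]
  rw [hlast, smul_zero, add_zero]

end Exp

section Newton
variable {S : Type*} [CommRing S]

lemma theta_one : theta (1 : PowerSeries S) = 0 := by
  ext n
  rw [coeff_theta, nsmul_coeff_one, map_zero]

lemma theta_one_add (a : S) :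
    theta (1 + PowerSeries.C (R := S) a * PowerSeries.X) = PowerSeries.C (R := S) a * PowerSeries.X := by
  ext n
  rw [coeff_theta]
  cases n with
  | zero => simp
  | succ k =>
    cases k with
    | zero => simp [PowerSeries.coeff_one]
    | succ j => simp [PowerSeries.coeff_one, PowerSeries.coeff_C_mul, PowerSeries.coeff_X]

noncomputable def invS (a : S) : PowerSeries S := PowerSeries.mk fun k => (-a) ^ k

lemma invS_mul (a : S) : invS a * (1 + PowerSeries.C (R := S) a * PowerSeries.X) = 1 := by
  ext n
  cases n with
  | zero => simp [invS, PowerSeries.coeff_one]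
  | succ k =>
    rw [mul_add, mul_one, map_add]
    have h1 : invS a * (PowerSeries.C (R := S) a * PowerSeries.X)
        = PowerSeries.C (R := S) a * (PowerSeries.X * invS a) := by ring
    rw [h1, PowerSeries.coeff_C_mul, PowerSeries.coeff_succ_X_mul]
    simp [invS, PowerSeries.coeff_one, pow_succ, mul_comm]

lemma theta_prod (c : ℕ → S) (s : Finset ℕ) :
    theta (∏ g ∈ s, (1 + PowerSeries.C (R := S) (c g) * PowerSeries.X))
      = (∑ g ∈ s, PowerSeries.C (R := S) (c g) * PowerSeries.X * invS (c g)) *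
        ∏ g ∈ s, (1 + PowerSeries.C (R := S) (c g) * PowerSeries.X) := by
  induction s using Finset.induction_on with
  | empty => simp [theta_one]
  | @insert a s ha ih =>
    rw [Finset.prod_insert ha, Finset.sum_insert ha, theta_mul, theta_one_add, ih]
    have h1 := invS_mul (c a)
    linear_combination (-(PowerSeries.C (R := S) (c a) * PowerSeries.X) *
      ∏ g ∈ s, (1 + PowerSeries.C (R := S) (c g) * PowerSeries.X)) * h1

lemma coeff_CXinv (a : S) (k : ℕ) :
    PowerSeries.coeff (R := S) k (PowerSeries.C (R := S) a * PowerSeries.X * invS a)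
      = if k = 0 then 0 else (-1) ^ (k - 1) * a ^ k := by
  have h1 : PowerSeries.C (R := S) a * PowerSeries.X * invS a
      = PowerSeries.C (R := S) a * (PowerSeries.X * invS a) := by ring
  rw [h1, PowerSeries.coeff_C_mul]
  cases k with
  | zero => simp
  | succ j =>
    rw [PowerSeries.coeff_succ_X_mul]
    simp only [invS, PowerSeries.coeff_mk, if_neg (Nat.succ_ne_zero j)]
    rw [neg_pow, Nat.add_sub_cancel]
    ring

end Newton


lemma zpow_mul_zpow (a b : ℤ) :
    (RatFunc.X : RatFunc ℚ) ^ a * RatFunc.X ^ b = RatFunc.X ^ (a + b) :=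
  (zpow_add₀ RatFunc.X_ne_zero a b).symm

lemma qIntF_ne_zero {k : ℕ} (hk : 1 ≤ k) : qIntF k ≠ 0 := by
  have key : (RatFunc.X : RatFunc ℚ) ^ ((k : ℤ) - 1) * qIntF k
      = algebraMap (Polynomial ℚ) (RatFunc ℚ)
          (∑ g ∈ Finset.range k, Polynomial.X ^ (2 * (k - 1 - g))) := by
    rw [qIntF, Finset.mul_sum, map_sum]
    refine Finset.sum_congr rfl fun g hg => ?_
    rw [Finset.mem_range] at hg
    rw [zpow_mul_zpow]
    have he : (k : ℤ) - 1 + ((k : ℤ) - (2 * g + 1)) = ((2 * (k - 1 - g) : ℕ) : ℤ) := by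
      push_cast [Nat.sub_sub]
      omega
    rw [he, zpow_natCast, map_pow, RatFunc.algebraMap_X]
  have hpoly : (∑ g ∈ Finset.range k, (Polynomial.X : Polynomial ℚ) ^ (2 * (k - 1 - g))) ≠ 0 := by
    intro hcon
    have hcoeff := congrArg (fun p => Polynomial.coeff p 0) hcon
    simp only [Polynomial.finset_sum_coeff, Polynomial.coeff_X_pow, Polynomial.coeff_zero] at hcoeff
    have hone : (∑ g ∈ Finset.range k, if 0 = 2 * (k - 1 - g) then (1:ℚ) else 0) = 1 := by
      rw [Finset.sum_eq_single (k-1)]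
      · rw [if_pos (by omega)]
      · intro g hg hne
        rw [Finset.mem_range] at hg
        rw [if_neg (by omega)]
      · intro h
        exact absurd (Finset.mem_range.mpr (by omega)) h
    rw [hone] at hcoeff
    norm_num at hcoeff
  intro hcon
  rw [hcon, mul_zero] at key
  exact RatFunc.algebraMap_ne_zero hpoly key.symm

lemma qIntF_factor {k : ℕ} (χ : ℕ) (hk : 1 ≤ k) :
    qIntF (k * χ) = qIntF k * ∑ g ∈ Finset.range χ,
      ((RatFunc.X : RatFunc ℚ) ^ ((χ : ℤ) - (2 * g + 1))) ^ k := by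
  rw [qIntF, qIntF, Finset.sum_mul_sum, ← Finset.sum_product']
  refine (Finset.sum_nbij' (i := fun p => p.2 * k + p.1) (j := fun G => (G % k, G / k))
    ?_ ?_ ?_ ?_ ?_).symm
  · rintro ⟨j, g⟩ hp
    simp only [Finset.mem_product, Finset.mem_range] at hp ⊢
    calc g * k + j < g * k + k := by omega
    _ = (g + 1) * k := by rw [Nat.succ_mul]
    _ ≤ χ * k := Nat.mul_le_mul_right k hp.2
    _ = k * χ := Nat.mul_comm χ k
  · intro G hG
    simp only [Finset.mem_range] at hG
    simp only [Finset.mem_product, Finset.mem_range]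
    exact ⟨Nat.mod_lt G hk, (Nat.div_lt_iff_lt_mul hk).mpr (by rw [mul_comm χ k]; exact hG)⟩
  · rintro ⟨j, g⟩ hp
    simp only [Finset.mem_product, Finset.mem_range] at hp
    have h1 : (g * k + j) % k = j := by
      rw [Nat.add_comm, Nat.add_mul_mod_self_right, Nat.mod_eq_of_lt hp.1]
    have h2 : (g * k + j) / k = g := by
      rw [Nat.add_comm, Nat.add_mul_div_right j g hk, Nat.div_eq_of_lt hp.1, Nat.zero_add]
    simp [h1, h2]
  · intro G hG
    simpa using Nat.div_add_mod' G k
  · rintro ⟨j, g⟩ hp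
    simp only [Finset.mem_product, Finset.mem_range] at hp
    simp only
    rw [← zpow_natCast ((RatFunc.X : RatFunc ℚ) ^ ((χ : ℤ) - (2 * g + 1))) k, ← zpow_mul,
      zpow_mul_zpow]
    congr 1
    push_cast
    ring

lemma d_zero (χ : ℕ) (d : ℕ → RatFunc ℚ)
    (hd : PowerSeries.mk d = ∏ g ∈ Finset.range χ,
      (1 + PowerSeries.C (R := (RatFunc ℚ)) (RatFunc.X ^ ((χ : ℤ) - (2 * g + 1))) * PowerSeries.X)) :
    d 0 = 1 := by
  have h := congrArg (PowerSeries.constantCoeff (R := (RatFunc ℚ))) hd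
  rw [map_prod] at h
  simpa using h

lemma d_rec (χ : ℕ) (d : ℕ → RatFunc ℚ)
    (hd : PowerSeries.mk d = ∏ g ∈ Finset.range χ,
      (1 + PowerSeries.C (R := (RatFunc ℚ)) (RatFunc.X ^ ((χ : ℤ) - (2 * g + 1))) * PowerSeries.X))
    (n : ℕ) :
    n • d n = ∑ k ∈ Finset.range n, ((-1 : RatFunc ℚ) ^ k) *
      ((∑ g ∈ Finset.range χ, ((RatFunc.X : RatFunc ℚ) ^ ((χ : ℤ) - (2 * g + 1))) ^ (k + 1)) *
        d (n - 1 - k)) := by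
  classical
  have h1 : theta (PowerSeries.mk d)
      = (∑ g ∈ Finset.range χ, PowerSeries.C (R := RatFunc ℚ)
            ((RatFunc.X : RatFunc ℚ) ^ ((χ : ℤ) - (2 * g + 1))) * PowerSeries.X *
            invS ((RatFunc.X : RatFunc ℚ) ^ ((χ : ℤ) - (2 * g + 1)))) * PowerSeries.mk d := by
    rw [hd]
    exact theta_prod (fun g => (RatFunc.X : RatFunc ℚ) ^ ((χ : ℤ) - (2 * g + 1)))
      (Finset.range χ)
  have h2 := congrArg (PowerSeries.coeff (R := (RatFunc ℚ)) n) h1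
  rw [coeff_theta, PowerSeries.coeff_mk, PowerSeries.coeff_mul] at h2
  simp only [map_sum, coeff_CXinv, PowerSeries.coeff_mk] at h2
  rw [Finset.Nat.sum_antidiagonal_eq_sum_range_succ_mk, Finset.sum_range_succ'] at h2
  simp only [eq_self_iff_true, if_true, if_pos, Finset.sum_const_zero, zero_mul, add_zero,
    if_neg (Nat.succ_ne_zero _), Nat.add_sub_cancel] at h2
  rw [h2]
  apply Finset.sum_congr rfl
  intro k hk
  rw [show n - (k + 1) = n - 1 - k from by omega]
  simp only [Finset.sum_mul, Finset.mul_sum]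
  exact Finset.sum_congr rfl fun g _ => by ring

section Helpers
variable {M : Type*} [AddCommMonoid M]

lemma swapL1 (m n : ℕ) (F : ℕ → ℕ → M) :
    ∑ k ∈ Finset.range n, ∑ r ∈ Finset.range (min m (n-1-k) + 1), F k r
      = ∑ r ∈ Finset.range (min m n + 1), ∑ k ∈ Finset.range (n - r), F k r := by
  apply Finset.sum_comm'
  intro k r
  simp only [Finset.mem_range]
  omega

lemma swapL2 (m n : ℕ) (F : ℕ → ℕ → M) :
    ∑ k ∈ Finset.range n, ∑ r ∈ Finset.range (min m (n-1-k) + 1),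
        (if k + 1 ≤ m - r then F k r else 0)
      = ∑ s ∈ Finset.range (min m n + 1), ∑ k ∈ Finset.range s, F k (s - 1 - k) := by
  classical
  rw [Finset.sum_sigma', Finset.sum_sigma']
  rw [← Finset.sum_filter]
  refine Finset.sum_nbij' (i := fun p => (⟨p.2 + p.1 + 1, p.1⟩ : Σ _ : ℕ, ℕ))
    (j := fun p => (⟨p.2, p.1 - 1 - p.2⟩ : Σ _ : ℕ, ℕ)) ?_ ?_ ?_ ?_ ?_
  · rintro ⟨k, r⟩ hp
    simp only [Finset.mem_filter, Finset.mem_sigma, Finset.mem_range, Nat.lt_succ_iff, le_inf_iff] at hp ⊢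
    omega
  · rintro ⟨s, k⟩ hp
    simp only [Finset.mem_filter, Finset.mem_sigma, Finset.mem_range, Nat.lt_succ_iff, le_inf_iff] at hp ⊢
    omega
  · rintro ⟨k, r⟩ hp
    simp only [Finset.mem_filter, Finset.mem_sigma, Finset.mem_range, Nat.lt_succ_iff, le_inf_iff] at hp
    show (⟨k, r + k + 1 - 1 - k⟩ : Σ _ : ℕ, ℕ) = ⟨k, r⟩
    rw [show r + k + 1 - 1 - k = r from by omega]
  · rintro ⟨s, k⟩ hp
    simp only [Finset.mem_filter, Finset.mem_sigma, Finset.mem_range, Nat.lt_succ_iff, le_inf_iff] at hp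
    show (⟨s - 1 - k + k + 1, k⟩ : Σ _ : ℕ, ℕ) = ⟨s, k⟩
    rw [show s - 1 - k + k + 1 = s from by omega]
  · rintro ⟨k, r⟩ hp
    simp only [Finset.mem_filter, Finset.mem_sigma, Finset.mem_range, Nat.lt_succ_iff, le_inf_iff] at hp
    show F k r = F k (r + k + 1 - 1 - k)
    rw [show r + k + 1 - 1 - k = r from by omega]

end Helpers

lemma nsmul_cancel {H : Type*} [AddCommGroup H] [Module ℚ H] {j : ℕ} (hj : j ≠ 0)
    {x y : H} (h : j • x = j • y) : x = y := by
  rw [← Nat.cast_smul_eq_nsmul ℚ, ← Nat.cast_smul_eq_nsmul ℚ] at h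
  exact smul_right_injective (r := (j:ℚ)) H (by exact_mod_cast hj) h

lemma rec_range {R : Type*} [Ring R] [Algebra ℚ R] (f : PowerSeries R)
    (h0 : PowerSeries.constantCoeff (R := R) f = 0)
    (hcc : ∀ i j, Commute (PowerSeries.coeff (R := R) i f) (PowerSeries.coeff (R := R) j f)) (n : ℕ) :
    n • PowerSeries.coeff (R := R) n (expH f)
      = ∑ k ∈ Finset.range n,
          ((k+1) • PowerSeries.coeff (R := R) (k+1) f) * PowerSeries.coeff (R := R) (n-1-k) (expH f) := by
  rw [exp_rec f h0 hcc n, Finset.Nat.sum_antidiagonal_eq_sum_range_succ_mk,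
    Finset.sum_range_succ']
  rw [zero_smul, zero_mul, add_zero]
  exact Finset.sum_congr rfl fun k _ => by rw [show n - (k+1) = n - 1 - k from by omega]

section CommC
variable {H : Type*} [Ring H] [Algebra (RatFunc ℚ) H] [Algebra ℚ H]
  [IsScalarTower ℚ (RatFunc ℚ) H]

lemma commC (Pp Pm hp : ℕ → H) (A : ℕ → RatFunc ℚ)
    (h0 : hp 0 = 1)
    (hrec : ∀ j, j • hp j = ∑ i ∈ Finset.range j, Pp (i+1) * hp (j-1-i))
    (hrel' : ∀ k i, 1 ≤ k → 1 ≤ i → Pm k * Pp i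
      = Pp i * Pm k + (if k = i then algebraMap (RatFunc ℚ) H (A k) * (k : H) else 0)) :
    ∀ j k, 1 ≤ k → Pm k * hp j
      = hp j * Pm k + (if k ≤ j then algebraMap (RatFunc ℚ) H (A k) * hp (j-k) else 0) := by
  intro j
  induction j using Nat.strong_induction_on with
  | _ j ih =>
    intro k hk
    rcases Nat.eq_zero_or_pos j with hj | hj
    · subst hj
      rw [h0, one_mul, mul_one, if_neg (by omega), add_zero]
    · apply nsmul_cancel (Nat.pos_iff_ne_zero.mp hj)
      set CA : H := algebraMap (RatFunc ℚ) H (A k) with hCA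
      have e1 : j • (Pm k * hp j) = ∑ i ∈ Finset.range j,
          (Pp (i+1) * (Pm k * hp (j-1-i))
            + (if k = i + 1 then CA * (k : H) else 0) * hp (j-1-i)) := by
        rw [← mul_smul_comm, hrec j, Finset.mul_sum]
        exact Finset.sum_congr rfl fun i _ => by
          rw [← mul_assoc, hrel' k (i+1) hk (by omega), add_mul, mul_assoc]
      have e2 : j • (Pm k * hp j) = (∑ i ∈ Finset.range j, Pp (i+1) * (hp (j-1-i) * Pm k))
          + ((∑ i ∈ Finset.range j, Pp (i+1) *
              (if k ≤ j-1-i then CA * hp (j-1-i-k) else 0))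
            + ∑ i ∈ Finset.range j, (if k = i + 1 then CA * (k : H) else 0) * hp (j-1-i)) := by
        rw [e1, Finset.sum_add_distrib, ← add_assoc]
        congr 1
        rw [← Finset.sum_add_distrib]
        refine Finset.sum_congr rfl fun i hi => ?_
        rw [Finset.mem_range] at hi
        rw [ih (j-1-i) (by omega) k hk, mul_add]
      have eA : ∑ i ∈ Finset.range j, Pp (i+1) * (hp (j-1-i) * Pm k)
          = j • (hp j * Pm k) := by
        rw [← smul_mul_assoc, hrec j, Finset.sum_mul]
        exact Finset.sum_congr rfl fun i _ => (mul_assoc _ _ _).symm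
      have eB : ∑ i ∈ Finset.range j, Pp (i+1) * (if k ≤ j-1-i then CA * hp (j-1-i-k) else 0)
          = (j-k) • (CA * hp (j-k)) := by
        have hsub : Finset.range (j-k) ⊆ Finset.range j :=
          Finset.range_subset_range.mpr (by omega)
        rw [show (∑ i ∈ Finset.range j, Pp (i+1) * (if k ≤ j-1-i then CA * hp (j-1-i-k) else 0))
            = ∑ i ∈ Finset.range (j-k), Pp (i+1) * (if k ≤ j-1-i then CA * hp (j-1-i-k) else 0)
          from (Finset.sum_subset hsub fun i _ hni => by
            rw [Finset.mem_range, not_lt] at hni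
            rw [if_neg (by omega), mul_zero]).symm]
        rw [← mul_smul_comm, hrec (j-k), Finset.mul_sum]
        refine Finset.sum_congr rfl fun i hi => ?_
        rw [Finset.mem_range] at hi
        rw [if_pos (by omega), show j-1-i-k = (j-k)-1-i from by omega,
          ← mul_assoc, ← Algebra.commutes, mul_assoc]
      have eC : ∑ i ∈ Finset.range j, (if k = i + 1 then CA * (k : H) else 0) * hp (j-1-i)
          = if k ≤ j then k • (CA * hp (j-k)) else 0 := by
        simp only [ite_mul, zero_mul]
        rcases le_or_gt k j with hkj | hkj
        · rw [Finset.sum_eq_single (k-1)]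
          · rw [if_pos (by omega), show j-1-(k-1) = j-k from by omega, if_pos hkj,
              mul_assoc, ← nsmul_eq_mul, mul_smul_comm]
          · intro i _ hi
            rw [if_neg (by omega)]
          · intro hni
            exact absurd (Finset.mem_range.mpr (by omega)) hni
        · rw [if_neg (by omega)]
          refine Finset.sum_eq_zero fun i hi => ?_
          rw [Finset.mem_range] at hi
          rw [if_neg (by omega)]
      rw [e2, eA, eB, eC, smul_add]
      congr 1
      rcases le_or_gt k j with hkj | hkj
      · rw [if_pos hkj, if_pos hkj, ← add_nsmul, show j - k + k = j from by omega]
      · rw [if_neg (by omega), if_neg (by omega), show j - k = 0 from by omega,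
          zero_smul, zero_add, smul_zero]

end CommC

lemma sign_smul {H : Type*} [Ring H] [Algebra ℚ H] (k : ℕ) (x : H) :
    ((-1:ℚ)^k) • x = (-1:H)^k * x := by
  rw [Algebra.smul_def, map_pow, map_neg, map_one]


/-- in the quantum Heisenberg algebra `H` with `χ ∈ ℤ_{≥0}`,
with `h⁺_n` as before and `e⁻_n` defined by
`Σ e⁻_n t^n = exp(-Σ_{r≥1} p⁻_r (-t)^r/r)`, we have
`e⁻_n h⁺_m = Σ_{r=0}^{min(m,n)} d_r h⁺_{m-r} e⁻_{n-r}`, where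
`Σ_r d_r u^r = Π_{g=0}^{χ-1} (1 + q^{χ-(2g+1)} u)`
(i.e. `d_r = qdim(Λ^r V)` for `V` with `qdim(V) = [χ]`). -/
theorem heisenberg_e_h_commutation
    (H : Type*) [Ring H] [Algebra (RatFunc ℚ) H] [Algebra ℚ H]
    [IsScalarTower ℚ (RatFunc ℚ) H]
    (χ : ℕ) (Pp Pm : ℕ → H)
    (hpp : ∀ m n, 1 ≤ m → 1 ≤ n → Commute (Pp m) (Pp n))
    (hmm : ∀ m n, 1 ≤ m → 1 ≤ n → Commute (Pm m) (Pm n))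
    (hrel : ∀ m n, 1 ≤ m → 1 ≤ n →
      Pm m * Pp n = Pp n * Pm m +
        (if m = n then algebraMap (RatFunc ℚ) H (qIntF (n * χ) * n / qIntF n) else 0))
    (hp em : ℕ → H)
    (hhp : PowerSeries.mk hp = expH (PowerSeries.mk fun r => ((r : ℚ)⁻¹) • Pp r))
    (hem : PowerSeries.mk em =
      expH (-(PowerSeries.mk fun r => (((-1 : ℚ) ^ r) * (r : ℚ)⁻¹) • Pm r)))
    (d : ℕ → RatFunc ℚ)
    (hd : PowerSeries.mk d =
        ∏ g ∈ Finset.range χ,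
          (1 + PowerSeries.C (R := (RatFunc ℚ)) (RatFunc.X ^ ((χ : ℤ) - (2 * g + 1))) *
            PowerSeries.X))
    (m n : ℕ) :
    em n * hp m =
      ∑ r ∈ Finset.range (min m n + 1),
        algebraMap (RatFunc ℚ) H (d r) * (hp (m - r) * em (n - r)) := by
  classical
  set A : ℕ → RatFunc ℚ :=
    fun k => ∑ g ∈ Finset.range χ, ((RatFunc.X : RatFunc ℚ) ^ ((χ : ℤ) - (2 * g + 1)))^k
    with hA
  set fP : PowerSeries H := PowerSeries.mk fun r => ((r : ℚ)⁻¹) • Pp r with hfP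
  set fM : PowerSeries H :=
    -(PowerSeries.mk fun r => (((-1 : ℚ) ^ r) * (r : ℚ)⁻¹) • Pm r) with hfM
  have hp_eq : ∀ j, hp j = PowerSeries.coeff (R := H) j (expH fP) := by
    intro j
    have := congrArg (PowerSeries.coeff (R := H) j) hhp
    rwa [PowerSeries.coeff_mk] at this
  have hem_eq : ∀ j, em j = PowerSeries.coeff (R := H) j (expH fM) := by
    intro j
    have := congrArg (PowerSeries.coeff (R := H) j) hem
    rwa [PowerSeries.coeff_mk] at this
  have h0P : PowerSeries.constantCoeff (R := H) fP = 0 := by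
    rw [hfP]
    simp
  have h0M : PowerSeries.constantCoeff (R := H) fM = 0 := by
    rw [hfM]
    simp
  have hccP : ∀ i j, Commute (PowerSeries.coeff (R := H) i fP) (PowerSeries.coeff (R := H) j fP) := by
    intro i j
    rw [hfP]
    simp only [PowerSeries.coeff_mk]
    rcases Nat.eq_zero_or_pos i with hi | hi
    · subst hi
      norm_num
    rcases Nat.eq_zero_or_pos j with hj | hj
    · subst hj
      norm_num
    exact ((hpp i j hi hj).smul_left _).smul_right _
  have hccM : ∀ i j, Commute (PowerSeries.coeff (R := H) i fM) (PowerSeries.coeff (R := H) j fM) := by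
    intro i j
    rw [hfM]
    simp only [map_neg, PowerSeries.coeff_mk]
    rcases Nat.eq_zero_or_pos i with hi | hi
    · subst hi
      norm_num
    rcases Nat.eq_zero_or_pos j with hj | hj
    · subst hj
      norm_num
    exact (((hmm i j hi hj).smul_left _).smul_right _).neg_left.neg_right
  have hp0 : hp 0 = 1 := by
    rw [hp_eq 0]
    simp [expH]
  have em0 : em 0 = 1 := by
    rw [hem_eq 0]
    simp [expH]
  have hrecp : ∀ j : ℕ, j • hp j = ∑ i ∈ Finset.range j, Pp (i+1) * hp (j-1-i) := by
    intro j
    rw [hp_eq j, rec_range fP h0P hccP j]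
    refine Finset.sum_congr rfl fun i _ => ?_
    rw [← hp_eq]
    congr 1
    rw [hfP, PowerSeries.coeff_mk, ← Nat.cast_smul_eq_nsmul ℚ, smul_smul,
      mul_inv_cancel₀ (by positivity), one_smul]
  have hrecm : ∀ j : ℕ, j • em j
      = ∑ k ∈ Finset.range j, ((-1:ℚ)^k) • (Pm (k+1) * em (j-1-k)) := by
    intro j
    rw [hem_eq j, rec_range fM h0M hccM j]
    refine Finset.sum_congr rfl fun k _ => ?_
    rw [← hem_eq, ← smul_mul_assoc]
    congr 1
    rw [hfM, map_neg, PowerSeries.coeff_mk, ← Nat.cast_smul_eq_nsmul ℚ, ← neg_smul, smul_smul]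
    congr 1
    have hknz : ((k:ℚ)+1) ≠ 0 := by positivity
    push_cast
    rw [pow_succ]
    field_simp
  have hrel2 : ∀ k i, 1 ≤ k → 1 ≤ i → Pm k * Pp i
      = Pp i * Pm k + (if k = i then algebraMap (RatFunc ℚ) H (A k) * (k : H) else 0) := by
    intro k i hk hi
    rw [hrel k i hk hi]
    congr 1
    by_cases hki : k = i
    · subst hki
      rw [if_pos rfl, if_pos rfl]
      have hv : qIntF (k * χ) * (k : RatFunc ℚ) / qIntF k = A k * (k : RatFunc ℚ) := by
        rw [qIntF_factor χ hk, hA]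
        field_simp [qIntF_ne_zero hk]
      rw [hv, map_mul, map_natCast]
    · rw [if_neg hki, if_neg hki]
  have hC := commC Pp Pm hp A hp0 hrecp hrel2
  have d0 : d 0 = 1 := d_zero χ d hd
  have drec : ∀ s : ℕ, s • d s = ∑ k ∈ Finset.range s,
      (-1 : RatFunc ℚ)^k * (A (k+1) * d (s-1-k)) := d_rec χ d hd
  -- main induction on n
  induction n using Nat.strong_induction_on with
  | _ n ih =>
    rcases Nat.eq_zero_or_pos n with hn | hn
    · subst hn
      simp [em0, d0]
    apply nsmul_cancel (Nat.pos_iff_ne_zero.mp hn)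
    have key : ∀ k r : ℕ,
        ((-1:ℚ)^k) • (Pm (k+1) * (algebraMap (RatFunc ℚ) H (d r) * (hp (m-r) * em (n-1-k-r))))
        = ((-1:ℚ)^k) • (algebraMap (RatFunc ℚ) H (d r) *
            (hp (m-r) * (Pm (k+1) * em (n-1-k-r))))
          + (if k+1 ≤ m-r then ((-1:ℚ)^k) • (algebraMap (RatFunc ℚ) H (d r) *
              (algebraMap (RatFunc ℚ) H (A (k+1)) * (hp (m-r-(k+1)) * em (n-1-k-r)))) else 0) := by
      intro k r
      have h1 : Pm (k+1) * (algebraMap (RatFunc ℚ) H (d r) * (hp (m-r) * em (n-1-k-r)))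
          = algebraMap (RatFunc ℚ) H (d r) * ((Pm (k+1) * hp (m-r)) * em (n-1-k-r)) := by
        rw [← mul_assoc, ← Algebra.commutes, mul_assoc]
        congr 1
        rw [← mul_assoc]
      rw [h1, hC (m-r) (k+1) (by omega)]
      by_cases hg : k+1 ≤ m-r
      · rw [if_pos hg, if_pos hg, add_mul, mul_add, smul_add]
        congr 2
        · rw [mul_assoc]
        · rw [mul_assoc]
      · rw [if_neg hg, if_neg hg, add_zero, add_zero, mul_assoc]
    have step2 : n • (em n * hp m) = ∑ k ∈ Finset.range n,
        ∑ r ∈ Finset.range (min m (n-1-k) + 1),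
          ((-1:ℚ)^k) • (Pm (k+1) *
            (algebraMap (RatFunc ℚ) H (d r) * (hp (m-r) * em (n-1-k-r)))) := by
      rw [← smul_mul_assoc, hrecm n, Finset.sum_mul]
      refine Finset.sum_congr rfl fun k hk => ?_
      rw [Finset.mem_range] at hk
      rw [smul_mul_assoc, mul_assoc, ih (n-1-k) (by omega), Finset.mul_sum, Finset.smul_sum]
    have step3 : n • (em n * hp m)
        = (∑ k ∈ Finset.range n, ∑ r ∈ Finset.range (min m (n-1-k) + 1),
            ((-1:ℚ)^k) • (algebraMap (RatFunc ℚ) H (d r) *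
              (hp (m-r) * (Pm (k+1) * em (n-1-k-r)))))
          + (∑ k ∈ Finset.range n, ∑ r ∈ Finset.range (min m (n-1-k) + 1),
              (if k+1 ≤ m-r then ((-1:ℚ)^k) • (algebraMap (RatFunc ℚ) H (d r) *
                (algebraMap (RatFunc ℚ) H (A (k+1)) * (hp (m-r-(k+1)) * em (n-1-k-r)))) else 0)) := by
      rw [step2, ← Finset.sum_add_distrib]
      refine Finset.sum_congr rfl fun k _ => ?_
      rw [← Finset.sum_add_distrib]
      exact Finset.sum_congr rfl fun r _ => key k r
    have T1 : ∑ k ∈ Finset.range n, ∑ r ∈ Finset.range (min m (n-1-k) + 1),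
          ((-1:ℚ)^k) • (algebraMap (RatFunc ℚ) H (d r) *
            (hp (m-r) * (Pm (k+1) * em (n-1-k-r))))
        = ∑ r ∈ Finset.range (min m n + 1),
            (n-r) • (algebraMap (RatFunc ℚ) H (d r) * (hp (m-r) * em (n-r))) := by
      rw [swapL1 m n]
      refine Finset.sum_congr rfl fun r _ => ?_
      have : (n-r) • (algebraMap (RatFunc ℚ) H (d r) * (hp (m-r) * em (n-r)))
          = ∑ k ∈ Finset.range (n-r), ((-1:ℚ)^k) • (algebraMap (RatFunc ℚ) H (d r) *
              (hp (m-r) * (Pm (k+1) * em (n-1-k-r)))) := by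
        rw [← mul_smul_comm, ← mul_smul_comm, hrecm (n-r), Finset.mul_sum, Finset.mul_sum]
        refine Finset.sum_congr rfl fun k hk => ?_
        rw [Finset.mem_range] at hk
        rw [mul_smul_comm, mul_smul_comm, show n-r-1-k = n-1-k-r from by omega]
      rw [this]
    have T2 : ∑ k ∈ Finset.range n, ∑ r ∈ Finset.range (min m (n-1-k) + 1),
          (if k+1 ≤ m-r then ((-1:ℚ)^k) • (algebraMap (RatFunc ℚ) H (d r) *
            (algebraMap (RatFunc ℚ) H (A (k+1)) * (hp (m-r-(k+1)) * em (n-1-k-r)))) else 0)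
        = ∑ s ∈ Finset.range (min m n + 1),
            s • (algebraMap (RatFunc ℚ) H (d s) * (hp (m-s) * em (n-s))) := by
      rw [swapL2 m n (fun k r => ((-1:ℚ)^k) • (algebraMap (RatFunc ℚ) H (d r) *
        (algebraMap (RatFunc ℚ) H (A (k+1)) * (hp (m-r-(k+1)) * em (n-1-k-r)))))]
      refine Finset.sum_congr rfl fun s hs => ?_
      rw [Finset.mem_range, Nat.lt_succ_iff, le_min_iff] at hs
      have hmap : s • (algebraMap (RatFunc ℚ) H (d s)) = algebraMap (RatFunc ℚ) H (s • d s) :=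
        (map_nsmul (algebraMap (RatFunc ℚ) H) s (d s)).symm
      rw [← smul_mul_assoc, hmap, drec s, map_sum, Finset.sum_mul]
      refine Finset.sum_congr rfl fun k hk => ?_
      rw [Finset.mem_range] at hk
      rw [show m - (s-1-k) - (k+1) = m - s from by omega,
        show n - 1 - k - (s-1-k) = n - s from by omega,
        sign_smul, map_mul, map_mul, map_pow, map_neg, map_one, mul_assoc, mul_assoc]
      congr 1
      rw [← mul_assoc, ← map_mul, mul_comm (d (s-1-k)) (A (k+1)), map_mul, mul_assoc]
    rw [step3, T1, T2, ← Finset.sum_add_distrib, Finset.smul_sum]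
    refine Finset.sum_congr rfl fun r hr => ?_
    rw [Finset.mem_range, Nat.lt_succ_iff, le_min_iff] at hr
    rw [← add_nsmul, show n - r + r = n from by omega]
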